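/- arXiv:2403.04748 — 3 statements merged into one kernel-verified Lean document; each statement's English description precedes it below -/
import Mathlib

section
/- Let a_m, ω_m > 0 and let (r₀, V₀, θ₀) satisfy r₀ ≥ 0, V₀ ≥ 0, V₀² ≤ 2a_m r₀. Define the trajectory under the auxiliary controller: on [0, t₁] accelerate a = a_m with ṙ = −V, V̇ = a, θ constant = θ₀; on [t₁, t₂] decelerate a = −a_m; on [t₂, t₃] rotate with θ̇ = −sign(θ₀)ω_m, where t₁ = −V₀/a_m + √(V₀²+2a_m r₀)/(a_m√2), t₂ = 2t₁ + V₀/a_m, t₃ = t₂ + |θ₀|/ω_m. Then the total cost F(r₀,θ₀,V₀) = ∫₀^{t₃} (r(τ)² + V(τ)² + θ(τ)²)dτ equals θ₀²·(√2·√(V₀²+2a_m r₀) − V₀)/a_m + |θ₀|³/(3ω_m) + √2·(V₀²+2a_m r₀)^{3/2}·(23V₀² + 40a_m² + 46a_m r₀)/(240 a_m³) − (V₀³/(3a_m) + V₀ r₀²/a_m + 2V₀³ r₀/(3a_m²) + 2V₀⁵/(15a_m³)). -/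
open Set

/-- Two functions with the same derivative (within `Icc a b`) on `Icc a b`
and the same value at `a` agree on `Icc a b`. -/
lemma eqOn_of_hasDerivWithinAt {a b : ℝ} {f g f' : ℝ → ℝ}
    (hf : ∀ t ∈ Icc a b, HasDerivWithinAt f (f' t) (Icc a b) t)
    (hg : ∀ t ∈ Icc a b, HasDerivWithinAt g (f' t) (Icc a b) t)
    (h0 : f a = g a) : ∀ t ∈ Icc a b, f t = g t := by
  rcases le_or_gt a b with hab | hab
  · refine eq_of_has_deriv_right_eq (f' := f') ?_ ?_ ?_ ?_ h0
    · intro x hx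
      exact (hf x ⟨hx.1, hx.2.le⟩).mono_of_mem_nhdsWithin (Icc_mem_nhdsGE_of_mem hx)
    · intro x hx
      exact (hg x ⟨hx.1, hx.2.le⟩).mono_of_mem_nhdsWithin (Icc_mem_nhdsGE_of_mem hx)
    · exact fun x hx => (hf x hx).continuousWithinAt
    · exact fun x hx => (hg x hx).continuousWithinAt
  · intro t ht
    rw [Icc_eq_empty (not_le.2 hab)] at ht
    exact ht.elim

/-- Integral of a quartic polynomial written in powers of `t - a`. -/
lemma integral_poly4 (a b p0 p1 p2 p3 p4 : ℝ) :
    (∫ t in a..b,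
        (p0 + p1 * (t - a) + p2 * (t - a) ^ 2 + p3 * (t - a) ^ 3 + p4 * (t - a) ^ 4))
    = p0 * (b - a) + p1 * (b - a) ^ 2 / 2 + p2 * (b - a) ^ 3 / 3
      + p3 * (b - a) ^ 4 / 4 + p4 * (b - a) ^ 5 / 5 := by
  have hD : ∀ t : ℝ, HasDerivAt
      (fun t : ℝ => p0 * (t - a) + p1 * (t - a) ^ 2 / 2 + p2 * (t - a) ^ 3 / 3
        + p3 * (t - a) ^ 4 / 4 + p4 * (t - a) ^ 5 / 5)
      (p0 + p1 * (t - a) + p2 * (t - a) ^ 2 + p3 * (t - a) ^ 3 + p4 * (t - a) ^ 4) t := by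
    intro t
    have h1 : HasDerivAt (fun t : ℝ => t - a) 1 t := (hasDerivAt_id t).sub_const a
    have H := (((((h1.pow 1).const_mul p0).div_const 1).add
        (((h1.pow 2).const_mul p1).div_const 2)).add
        (((h1.pow 3).const_mul p2).div_const 3)).add
        ((((h1.pow 4).const_mul p3).div_const 4).add
          (((h1.pow 5).const_mul p4).div_const 5))
    convert H using 1
    · rfl
    · rfl
    · funext u; simp only [Pi.add_apply, Pi.pow_apply]; push_cast; ring
    · push_cast; ring
  rw [intervalIntegral.integral_eq_sub_of_hasDerivAt (fun x _ => hD x)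
      ((by fun_prop : Continuous fun t : ℝ =>
        (p0 + p1 * (t - a) + p2 * (t - a) ^ 2 + p3 * (t - a) ^ 3
          + p4 * (t - a) ^ 4)).intervalIntegrable a b)]
  ring

set_option maxHeartbeats 2000000 in
/-- Proposition 1: the total cost along the auxiliary trajectory equals the
    explicit closed-form terminal cost. -/
theorem terminal_cost_closed_form
    (a_m ω_m r₀ V₀ θ₀ : ℝ)
    (ha : a_m > 0) (hω : ω_m > 0)
    (hr₀ : r₀ ≥ 0) (hV₀ : V₀ ≥ 0) (hVr : V₀ ^ 2 ≤ 2 * a_m * r₀)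
    (t₁ t₂ t₃ : ℝ)
    (ht₁ : t₁ = -(V₀ / a_m) + Real.sqrt (V₀ ^ 2 + 2 * a_m * r₀) / (a_m * Real.sqrt 2))
    (ht₂ : t₂ = 2 * t₁ + V₀ / a_m)
    (ht₃ : t₃ = t₂ + |θ₀| / ω_m)
    (r V θ : ℝ → ℝ)
    (hr0 : r 0 = r₀) (hV0 : V 0 = V₀) (hθ0 : θ 0 = θ₀)
    -- accelerate on [0, t₁]
    (hrdot1 : ∀ t ∈ Icc (0:ℝ) t₁, HasDerivWithinAt r (-(V t)) (Icc (0:ℝ) t₁) t)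
    (hVdot1 : ∀ t ∈ Icc (0:ℝ) t₁, HasDerivWithinAt V a_m (Icc (0:ℝ) t₁) t)
    (hθ1 : ∀ t ∈ Icc (0:ℝ) t₂, θ t = θ₀)
    -- decelerate on [t₁, t₂]
    (hrdot2 : ∀ t ∈ Icc t₁ t₂, HasDerivWithinAt r (-(V t)) (Icc t₁ t₂) t)
    (hVdot2 : ∀ t ∈ Icc t₁ t₂, HasDerivWithinAt V (-a_m) (Icc t₁ t₂) t)
    -- rotate at the origin on [t₂, t₃]
    (hr3 : ∀ t ∈ Icc t₂ t₃, r t = 0)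
    (hV3 : ∀ t ∈ Icc t₂ t₃, V t = 0)
    (hθdot3 : ∀ t ∈ Icc t₂ t₃,
      HasDerivWithinAt θ (-(Real.sign θ₀) * ω_m) (Icc t₂ t₃) t) :
    (∫ τ in (0:ℝ)..t₃, (r τ ^ 2 + V τ ^ 2 + θ τ ^ 2))
    = θ₀ ^ 2 * ((Real.sqrt 2 * Real.sqrt (V₀ ^ 2 + 2 * a_m * r₀) - V₀) / a_m)
      + |θ₀| ^ 3 / (3 * ω_m)
      + Real.sqrt 2 * (V₀ ^ 2 + 2 * a_m * r₀) ^ ((3:ℝ)/2)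
          * (23 * V₀ ^ 2 + 40 * a_m ^ 2 + 46 * a_m * r₀) / (240 * a_m ^ 3)
      - (V₀ ^ 3 / (3 * a_m) + V₀ * r₀ ^ 2 / a_m
          + 2 * V₀ ^ 3 * r₀ / (3 * a_m ^ 2)
          + 2 * V₀ ^ 5 / (15 * a_m ^ 3)) := by
  have hX : (0:ℝ) ≤ V₀ ^ 2 + 2 * a_m * r₀ := by positivity
  set s : ℝ := Real.sqrt (V₀ ^ 2 + 2 * a_m * r₀) with hs_def
  have hw2 : (Real.sqrt 2) ^ 2 = 2 := Real.sq_sqrt (by norm_num)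
  have hwpos : (0:ℝ) < Real.sqrt 2 := Real.sqrt_pos.2 (by norm_num)
  have hs2 : s ^ 2 = V₀ ^ 2 + 2 * a_m * r₀ := Real.sq_sqrt hX
  have hsnn : 0 ≤ s := Real.sqrt_nonneg _
  -- s ≥ √2 · V₀
  have hsV : Real.sqrt 2 * V₀ ≤ s := by
    have h1 : Real.sqrt 2 * V₀ = Real.sqrt (2 * V₀ ^ 2) := by
      rw [Real.sqrt_mul (by norm_num), Real.sqrt_sq hV₀]
    rw [h1, hs_def]
    exact Real.sqrt_le_sqrt (by linarith)
  -- rewrite t₁ in terms of k = √2 · s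
  have ht1' : t₁ = (Real.sqrt 2 * s - 2 * V₀) / (2 * a_m) := by
    have hane : a_m ≠ 0 := ne_of_gt ha
    have hwne : Real.sqrt 2 ≠ 0 := ne_of_gt hwpos
    rw [ht₁]
    field_simp
    ring_nf
    rw [hw2]
    ring
  have hkV : 2 * V₀ ≤ Real.sqrt 2 * s := by
    nlinarith [hsV, hwpos.le, hw2]
  have ht1nn : 0 ≤ t₁ := by
    rw [ht1']; exact div_nonneg (by linarith) (by positivity)
  have ht12 : t₁ ≤ t₂ := by
    rw [ht₂]; have : 0 ≤ V₀ / a_m := by positivity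
    linarith
  have ht2nn : (0:ℝ) ≤ t₂ := le_trans ht1nn ht12
  have ht23 : t₂ ≤ t₃ := by
    rw [ht₃]; have : 0 ≤ |θ₀| / ω_m := by positivity
    linarith
  -- Phase 1 explicit formulas
  have hVf1 : ∀ t ∈ Icc (0:ℝ) t₁, V t = V₀ + a_m * t := by
    refine eqOn_of_hasDerivWithinAt (f' := fun _ => a_m) hVdot1 ?_ (by simpa using hV0)
    intro t ht
    have : HasDerivAt (fun t : ℝ => V₀ + a_m * t) a_m t := by
      simpa using ((hasDerivAt_id t).const_mul a_m).const_add V₀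
    exact this.hasDerivWithinAt
  have hrf1 : ∀ t ∈ Icc (0:ℝ) t₁, r t = r₀ - V₀ * t - a_m * t ^ 2 / 2 := by
    refine eqOn_of_hasDerivWithinAt (f' := fun t => -(V t)) hrdot1 ?_ (by simpa using hr0)
    intro t ht
    have hD : HasDerivAt (fun u : ℝ => r₀ - V₀ * u - a_m * u ^ 2 / 2) (-(V₀ + a_m * t)) t := by
      have H := ((hasDerivAt_const t r₀).sub ((hasDerivAt_id t).const_mul V₀)).sub
        (((hasDerivAt_pow 2 t).const_mul a_m).div_const 2)
      refine H.congr_deriv ?_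
      push_cast; ring
    have hD' := hD.hasDerivWithinAt (s := Icc (0:ℝ) t₁)
    rw [← hVf1 t ht] at hD'
    exact hD'
  have ht1mem : t₁ ∈ Icc (0:ℝ) t₁ := ⟨ht1nn, le_refl _⟩
  have hVt1 : V t₁ = V₀ + a_m * t₁ := hVf1 t₁ ht1mem
  have hrt1 : r t₁ = r₀ - V₀ * t₁ - a_m * t₁ ^ 2 / 2 := hrf1 t₁ ht1mem
  -- Phase 2 explicit formulas
  have hVf2 : ∀ t ∈ Icc t₁ t₂, V t = (V₀ + a_m * t₁) - a_m * (t - t₁) := by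
    refine eqOn_of_hasDerivWithinAt (f' := fun _ => -a_m) hVdot2 ?_ (by simp [hVt1])
    intro t ht
    have : HasDerivAt (fun t : ℝ => (V₀ + a_m * t₁) - a_m * (t - t₁)) (-a_m) t := by
      have H := (hasDerivAt_const t (V₀ + a_m * t₁)).sub
        (((hasDerivAt_id t).sub_const t₁).const_mul a_m)
      refine H.congr_deriv ?_
      ring
    exact this.hasDerivWithinAt
  have hrf2 : ∀ t ∈ Icc t₁ t₂, r t =
      (r₀ - V₀ * t₁ - a_m * t₁ ^ 2 / 2) - (V₀ + a_m * t₁) * (t - t₁)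
        + a_m * (t - t₁) ^ 2 / 2 := by
    refine eqOn_of_hasDerivWithinAt (f' := fun t => -(V t)) hrdot2 ?_ (by simp [hrt1])
    intro t ht
    have hD : HasDerivAt (fun u : ℝ =>
        (r₀ - V₀ * t₁ - a_m * t₁ ^ 2 / 2) - (V₀ + a_m * t₁) * (u - t₁)
          + a_m * (u - t₁) ^ 2 / 2)
        (-((V₀ + a_m * t₁) - a_m * (t - t₁))) t := by
      have h1 : HasDerivAt (fun u : ℝ => u - t₁) 1 t := (hasDerivAt_id t).sub_const t₁
      have H := ((hasDerivAt_const t (r₀ - V₀ * t₁ - a_m * t₁ ^ 2 / 2)).sub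
        (h1.const_mul (V₀ + a_m * t₁))).add (((h1.pow 2).const_mul a_m).div_const 2)
      refine H.congr_deriv ?_
      push_cast; ring
    have hD' := hD.hasDerivWithinAt (s := Icc t₁ t₂)
    rw [← hVf2 t ht] at hD'
    exact hD'
  -- Phase 3 explicit formula for θ
  have hθf3 : ∀ t ∈ Icc t₂ t₃, θ t = θ₀ - Real.sign θ₀ * ω_m * (t - t₂) := by
    refine eqOn_of_hasDerivWithinAt (f' := fun _ => -(Real.sign θ₀) * ω_m) hθdot3 ?_
      (by simp [hθ1 t₂ ⟨ht2nn, le_refl _⟩])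
    intro t ht
    have : HasDerivAt (fun t : ℝ => θ₀ - Real.sign θ₀ * ω_m * (t - t₂))
        (-(Real.sign θ₀) * ω_m) t := by
      have H := (hasDerivAt_const t θ₀).sub
        (((hasDerivAt_id t).sub_const t₂).const_mul (Real.sign θ₀ * ω_m))
      refine H.congr_deriv ?_
      ring
    exact this.hasDerivWithinAt
  have hθsq : ∀ t ∈ Icc t₂ t₃, (θ t) ^ 2 = (|θ₀| - ω_m * (t - t₂)) ^ 2 := by
    intro t ht
    rw [hθf3 t ht]
    rcases lt_trichotomy θ₀ 0 with h | h | h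
    · rw [Real.sign_of_neg h, abs_of_neg h]; ring
    · have ht3eq : t₃ = t₂ := by rw [ht₃, h]; simp
      have : t = t₂ := le_antisymm (ht3eq ▸ ht.2) ht.1
      rw [this, h]; simp
    · rw [Real.sign_of_pos h, abs_of_pos h]; ring
  -- The integrand agrees with explicit polynomials on each phase
  set F : ℝ → ℝ := fun τ => r τ ^ 2 + V τ ^ 2 + θ τ ^ 2 with hF
  set P1 : ℝ → ℝ := fun t =>
    (r₀ ^ 2 + V₀ ^ 2 + θ₀ ^ 2) + (2 * V₀ * a_m - 2 * r₀ * V₀) * (t - 0)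
      + (V₀ ^ 2 - a_m * r₀ + a_m ^ 2) * (t - 0) ^ 2 + (V₀ * a_m) * (t - 0) ^ 3
      + (a_m ^ 2 / 4) * (t - 0) ^ 4 with hP1_def
  set rm : ℝ := r₀ - V₀ * t₁ - a_m * t₁ ^ 2 / 2 with hrm
  set Vm : ℝ := V₀ + a_m * t₁ with hVm
  set P2 : ℝ → ℝ := fun t =>
    (rm ^ 2 + Vm ^ 2 + θ₀ ^ 2) + (-(2 * rm * Vm) - 2 * Vm * a_m) * (t - t₁)
      + (Vm ^ 2 + a_m * rm + a_m ^ 2) * (t - t₁) ^ 2 + (-(Vm * a_m)) * (t - t₁) ^ 3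
      + (a_m ^ 2 / 4) * (t - t₁) ^ 4 with hP2_def
  set P3 : ℝ → ℝ := fun t =>
    (|θ₀| ^ 2) + (-(2 * |θ₀| * ω_m)) * (t - t₂) + (ω_m ^ 2) * (t - t₂) ^ 2
      + (0:ℝ) * (t - t₂) ^ 3 + (0:ℝ) * (t - t₂) ^ 4 with hP3_def
  have hE1 : EqOn F P1 (Icc (0:ℝ) t₁) := by
    intro t ht
    have hθt : θ t = θ₀ := hθ1 t ⟨ht.1, ht.2.trans ht12⟩
    simp only [hF, hP1_def]
    rw [hrf1 t ht, hVf1 t ht, hθt]; ring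
  have hE2 : EqOn F P2 (Icc t₁ t₂) := by
    intro t ht
    have hθt : θ t = θ₀ := hθ1 t ⟨le_trans ht1nn ht.1, ht.2⟩
    simp only [hF, hP2_def]
    rw [hrf2 t ht, hVf2 t ht, hθt, hrm, hVm]; ring
  have hE3 : EqOn F P3 (Icc t₂ t₃) := by
    intro t ht
    simp only [hF, hP3_def]
    rw [hr3 t ht, hV3 t ht, hθsq t ht]; ring
  -- Integrability
  have hint : ∀ (a b : ℝ) (P : ℝ → ℝ), a ≤ b → Continuous P → EqOn F P (Icc a b) →
      IntervalIntegrable F MeasureTheory.volume a b := by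
    intro a b P hab hPc hFP
    rw [intervalIntegrable_iff_integrableOn_Ioc_of_le hab]
    exact ((hPc.intervalIntegrable a b).1.congr_fun
      (fun t ht => (hFP (Ioc_subset_Icc_self ht)).symm) measurableSet_Ioc)
  have hi1 : IntervalIntegrable F MeasureTheory.volume 0 t₁ :=
    hint 0 t₁ P1 ht1nn (by simp only [hP1_def]; fun_prop) hE1
  have hi2 : IntervalIntegrable F MeasureTheory.volume t₁ t₂ :=
    hint t₁ t₂ P2 ht12 (by simp only [hP2_def]; fun_prop) hE2
  have hi3 : IntervalIntegrable F MeasureTheory.volume t₂ t₃ :=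
    hint t₂ t₃ P3 ht23 (by simp only [hP3_def]; fun_prop) hE3
  -- Split the integral and evaluate each piece
  have hsplit : (∫ τ in (0:ℝ)..t₃, F τ)
      = (∫ τ in (0:ℝ)..t₁, F τ) + (∫ τ in t₁..t₂, F τ) + (∫ τ in t₂..t₃, F τ) := by
    rw [intervalIntegral.integral_add_adjacent_intervals hi1 hi2,
      intervalIntegral.integral_add_adjacent_intervals (hi1.trans hi2) hi3]
  have hI1 : (∫ τ in (0:ℝ)..t₁, F τ) = ∫ τ in (0:ℝ)..t₁, P1 τ :=
    intervalIntegral.integral_congr (by rwa [uIcc_of_le ht1nn])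
  have hI2 : (∫ τ in t₁..t₂, F τ) = ∫ τ in t₁..t₂, P2 τ :=
    intervalIntegral.integral_congr (by rwa [uIcc_of_le ht12])
  have hI3 : (∫ τ in t₂..t₃, F τ) = ∫ τ in t₂..t₃, P3 τ :=
    intervalIntegral.integral_congr (by rwa [uIcc_of_le ht23])
  have hv1 := integral_poly4 0 t₁ (r₀ ^ 2 + V₀ ^ 2 + θ₀ ^ 2) (2 * V₀ * a_m - 2 * r₀ * V₀)
    (V₀ ^ 2 - a_m * r₀ + a_m ^ 2) (V₀ * a_m) (a_m ^ 2 / 4)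
  have hv2 := integral_poly4 t₁ t₂ (rm ^ 2 + Vm ^ 2 + θ₀ ^ 2) (-(2 * rm * Vm) - 2 * Vm * a_m)
    (Vm ^ 2 + a_m * rm + a_m ^ 2) (-(Vm * a_m)) (a_m ^ 2 / 4)
  have hv3 := integral_poly4 t₂ t₃ (|θ₀| ^ 2) (-(2 * |θ₀| * ω_m)) (ω_m ^ 2) 0 0
  -- Final algebraic computation
  have hrpow : Real.sqrt 2 * (V₀ ^ 2 + 2 * a_m * r₀) ^ ((3:ℝ)/2)
      = (Real.sqrt 2 * s) * (V₀ ^ 2 + 2 * a_m * r₀) := by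
    have h1 : (V₀ ^ 2 + 2 * a_m * r₀) ^ ((3:ℝ)/2) = s ^ 3 := by
      rw [show ((3:ℝ)/2) = (1/2) * ((3:ℕ):ℝ) by push_cast; ring,
        Real.rpow_mul hX, Real.rpow_natCast, hs_def, ← Real.sqrt_eq_rpow]
    rw [h1]; linear_combination (Real.sqrt 2 * s) * hs2
  have goal_eq : (∫ τ in (0:ℝ)..t₃, (r τ ^ 2 + V τ ^ 2 + θ τ ^ 2))
      = (∫ τ in (0:ℝ)..t₃, F τ) := rfl
  rw [goal_eq, hsplit, hI1, hI2, hI3, hP1_def, hP2_def, hP3_def, hv1, hv2, hv3, hrpow]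
  -- eliminate t's
  have ht2' : t₂ = (Real.sqrt 2 * s - V₀) / a_m := by
    rw [ht₂, ht1']; field_simp; ring
  have ht3' : t₃ - t₂ = |θ₀| / ω_m := by rw [ht₃]; ring
  have hk2 : (Real.sqrt 2 * s) ^ 2 = 2 * (V₀ ^ 2 + 2 * a_m * r₀) := by
    rw [mul_pow, hw2, hs2]
  have hr0' : r₀ = ((Real.sqrt 2 * s) ^ 2 - 2 * V₀ ^ 2) / (4 * a_m) := by
    rw [hk2]; field_simp; ring
  have hA2 : θ₀ ^ 2 = |θ₀| ^ 2 := (sq_abs θ₀).symm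
  rw [ht3', hVm, hrm, ht2', ht1', hA2, hr0']
  set k : ℝ := Real.sqrt 2 * s with hk
  set A : ℝ := |θ₀| with hA
  field_simp
  ring
end

section
/- Let F(r, θ, V) = θ²(√2·√(V²+2a_m r) − V)/a_m + |θ|³/(3ω_m) + √2·(V²+2a_m r)^{3/2}(23V² + 40a_m² + 46a_m r)/(240 a_m³) − (V³/(3a_m) + V r²/a_m + 2V³ r/(3a_m²) + 2V⁵/(15a_m³)). Then along the flow ṙ = −V, θ̇ = 0, V̇ = a_m (the 'accelerate' mode), if (r,V) ≠ (0,0) and V² < 2a_m r with r > 0, V ≥ 0, one has dF/dt = −(r² + θ² + V²). -/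
open Filter


/-- The NMPC terminal cost in terminal-set coordinates (r, θ, V). -/
noncomputable def terminalCost (a_m ω_m r θ V : ℝ) : ℝ :=
  θ ^ 2 * ((Real.sqrt 2 * Real.sqrt (V ^ 2 + 2 * a_m * r) - V) / a_m)
    + |θ| ^ 3 / (3 * ω_m)
    + Real.sqrt 2 * (V ^ 2 + 2 * a_m * r) ^ ((3:ℝ)/2)
        * (23 * V ^ 2 + 40 * a_m ^ 2 + 46 * a_m * r) / (240 * a_m ^ 3)
    - (V ^ 3 / (3 * a_m) + V * r ^ 2 / a_m
        + 2 * V ^ 3 * r / (3 * a_m ^ 2)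
        + 2 * V ^ 5 / (15 * a_m ^ 3))

lemma abs_cube_deriv (x : ℝ) : HasDerivAt (fun y : ℝ => |y| ^ 3) (3 * x * |x|) x := by
  rcases lt_trichotomy x 0 with hx | hx | hx
  · have h : (fun y : ℝ => -(y ^ 3)) =ᶠ[nhds x] (fun y : ℝ => |y| ^ 3) := by
      filter_upwards [Iio_mem_nhds hx] with y hy
      rw [abs_of_neg hy]; ring
    have h' : HasDerivAt (fun y : ℝ => -(y ^ 3)) (-((3:ℕ) * x ^ 2)) x :=
      (hasDerivAt_pow 3 x).neg
    have := h'.congr_of_eventuallyEq h.symm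
    refine this.congr_deriv ?_
    rw [abs_of_neg hx]; push_cast; ring
  · subst hx
    rw [hasDerivAt_iff_tendsto_slope]
    have hb : Tendsto (fun y : ℝ => y ^ 2) (nhdsWithin 0 {(0:ℝ)}ᶜ) (nhds 0) := by
      have : Tendsto (fun y : ℝ => y ^ 2) (nhds (0:ℝ)) (nhds 0) := by
        simpa using (continuous_pow 2).tendsto (0:ℝ)
      exact this.mono_left nhdsWithin_le_nhds
    have : Tendsto (slope (fun y : ℝ => |y| ^ 3) 0) (nhdsWithin 0 {(0:ℝ)}ᶜ)
        (nhds 0) := by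
      apply squeeze_zero_norm _ hb
      intro y
      rcases eq_or_ne y 0 with hy | hy
      · simp [hy, slope_def_field]
      · have : slope (fun y : ℝ => |y| ^ 3) 0 y = |y| ^ 3 / y := by
          simp [slope_def_field, div_eq_div_iff]
        rw [this]
        rw [Real.norm_eq_abs, abs_div, abs_pow, abs_abs]
        rw [div_le_iff₀ (abs_pos.mpr hy)]
        have h2 : y ^ 2 = |y| ^ 2 := (sq_abs y).symm
        rw [h2, pow_succ]
    simpa using this
  · have h : (fun y : ℝ => y ^ 3) =ᶠ[nhds x] (fun y : ℝ => |y| ^ 3) := by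
      filter_upwards [Ioi_mem_nhds hx] with y hy
      rw [abs_of_pos hy]
    have h' : HasDerivAt (fun y : ℝ => y ^ 3) ((3:ℕ) * x ^ 2) x := hasDerivAt_pow 3 x
    have := h'.congr_of_eventuallyEq h.symm
    refine this.congr_deriv ?_
    rw [abs_of_pos hx]; push_cast; ring

/-- Along the 'accelerate' mode ṙ = −V, θ̇ = 0, V̇ = a_m, with
    r > 0, V ≥ 0, V² < 2a_m r, the terminal cost decreases at rate
    exactly the stage cost: dF/dt = −(r² + θ² + V²). -/
theorem terminal_cost_decrease_accelerate
    (a_m ω_m : ℝ) (ha : a_m > 0) (hω : ω_m > 0)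
    (r θ V : ℝ → ℝ) (t : ℝ)
    (hrdot : HasDerivAt r (-(V t)) t)
    (hθdot : HasDerivAt θ 0 t)
    (hVdot : HasDerivAt V a_m t)
    (hrpos : r t > 0) (hVpos : V t ≥ 0)
    (hVr : (V t) ^ 2 < 2 * a_m * r t)
    (hne : (r t, V t) ≠ (0, 0)) :
    HasDerivAt (fun s => terminalCost a_m ω_m (r s) (θ s) (V s))
      (-((r t) ^ 2 + (θ t) ^ 2 + (V t) ^ 2)) t := by
  have hu_pos : 0 < V t ^ 2 + 2 * a_m * r t := by nlinarith [sq_nonneg (V t)]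
  have hu0 : HasDerivAt (fun s => V s ^ 2 + 2 * a_m * r s) 0 t := by
    have h := (hVdot.pow 2).add (hrdot.const_mul (2 * a_m))
    refine h.congr_deriv ?_
    push_cast; ring
  have hsqrt : HasDerivAt (fun s => Real.sqrt (V s ^ 2 + 2 * a_m * r s)) 0 t := by
    simpa using hu0.sqrt hu_pos.ne'
  have hrpow : HasDerivAt (fun s => (V s ^ 2 + 2 * a_m * r s) ^ ((3:ℝ)/2)) 0 t := by
    simpa using hu0.rpow_const (Or.inl hu_pos.ne')
  have hg : HasDerivAt (fun s => 23 * V s ^ 2 + 40 * a_m ^ 2 + 46 * a_m * r s) 0 t := by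
    have h := (((hVdot.pow 2).const_mul 23).add_const (40 * a_m ^ 2)).add
      (hrdot.const_mul (46 * a_m))
    refine h.congr_deriv ?_
    push_cast; ring
  have habs : HasDerivAt (fun s => |θ s| ^ 3) 0 t := by
    have h := (abs_cube_deriv (θ t)).comp t hθdot
    rw [mul_zero] at h; exact h
  have hA := (hθdot.pow 2).mul (((hsqrt.const_mul (Real.sqrt 2)).sub hVdot).div_const a_m)
  have hB := habs.div_const (3 * ω_m)
  have hC := ((hrpow.const_mul (Real.sqrt 2)).mul hg).div_const (240 * a_m ^ 3)
  have hD1 := (hVdot.pow 3).div_const (3 * a_m)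
  have hD2 := (hVdot.mul (hrdot.pow 2)).div_const a_m
  have hD3 := (((hVdot.pow 3).const_mul 2).mul hrdot).div_const (3 * a_m ^ 2)
  have hD4 := ((hVdot.pow 5).const_mul 2).div_const (15 * a_m ^ 3)
  have H := (((hA.add hB).add hC).sub (((hD1.add hD2).add hD3).add hD4))
  have hFun : (fun s => terminalCost a_m ω_m (r s) (θ s) (V s)) =
      (fun s =>
        (θ s ^ 2 * ((Real.sqrt 2 * Real.sqrt (V s ^ 2 + 2 * a_m * r s) - V s) / a_m)
          + |θ s| ^ 3 / (3 * ω_m)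
          + Real.sqrt 2 * (V s ^ 2 + 2 * a_m * r s) ^ ((3:ℝ)/2)
              * (23 * V s ^ 2 + 40 * a_m ^ 2 + 46 * a_m * r s) / (240 * a_m ^ 3))
          - (V s ^ 3 / (3 * a_m) + V s * r s ^ 2 / a_m
              + 2 * V s ^ 3 * r s / (3 * a_m ^ 2)
              + 2 * V s ^ 5 / (15 * a_m ^ 3))) := by
    funext s; simp [terminalCost]
  rw [hFun]
  refine H.congr_deriv ?_
  push_cast
  simp only [Pi.pow_apply]
  field_simp
  ring
end

section
/- The terminal cost F(r,θ,V) = θ²(√2·√(V²+2a_m r) − V)/a_m + |θ|³/(3ω_m) + √2·(V²+2a_m r)^{3/2}(23V²+40a_m²+46a_m r)/(240 a_m³) − (V³/(3a_m) + V r²/a_m + 2V³ r/(3a_m²) + 2V⁵/(15a_m³)) satisfies F(0,0,0) = 0 and F(r,θ,V) ≥ 0 for all r ≥ 0, θ ∈ ℝ, V ≥ 0 with V² ≤ 2a_m r. -/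
set_option maxHeartbeats 1000000

lemma rpow_three_halves (x : ℝ) (hx : 0 ≤ x) :
    x ^ ((3:ℝ)/2) = Real.sqrt x ^ 3 := by
  rw [Real.sqrt_eq_rpow, ← Real.rpow_natCast (x ^ ((1:ℝ)/2)) 3,
    ← Real.rpow_mul hx]
  norm_num

/-- Core algebraic inequality, stated for opaque `q`, `s`. -/
lemma core_ineq (a_m r V q s : ℝ) (ha : 0 < a_m) (hr : 0 ≤ r) (hV : 0 ≤ V)
    (hq0 : 0 ≤ q) (hq2 : q ^ 2 = 2) (hs0 : 0 ≤ s)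
    (hs2 : s ^ 2 = V ^ 2 + 2 * a_m * r) (hle : V ^ 2 ≤ 2 * a_m * r) :
    80 * a_m ^ 2 * V ^ 3 + 240 * a_m ^ 2 * V * r ^ 2
      + 160 * a_m * V ^ 3 * r + 32 * V ^ 5
      ≤ q * s ^ 3 * (23 * V ^ 2 + 40 * a_m ^ 2 + 46 * a_m * r) := by
  have hq1 : 1 ≤ q := by nlinarith
  have hqpos : 0 < q := lt_of_lt_of_le one_pos hq1
  have hw0 : 0 ≤ q * V := mul_nonneg hq0 hV
  have hsV : q * V ≤ s := by
    have h1 : (q * V) ^ 2 ≤ s ^ 2 := by nlinarith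
    nlinarith [sq_nonneg (s - q * V), sq_nonneg (s + q * V)]
  -- e1 :  80 a² V³ ≤ 40 q a² s³
  have h3 : (q * V) ^ 3 ≤ s ^ 3 := pow_le_pow_left₀ hw0 hsV 3
  have h4 : 40 * q * a_m ^ 2 * (q * V) ^ 3 ≤ 40 * q * a_m ^ 2 * s ^ 3 :=
    mul_le_mul_of_nonneg_left h3 (by positivity)
  have h5 : 40 * q * a_m ^ 2 * (q * V) ^ 3 = 160 * a_m ^ 2 * V ^ 3 := by
    linear_combination (40 * a_m ^ 2 * V ^ 3 * (q ^ 2 + 2)) * hq2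
  have e1 : 80 * a_m ^ 2 * V ^ 3 ≤ 40 * q * a_m ^ 2 * s ^ 3 := by
    nlinarith [mul_nonneg (sq_nonneg a_m) (mul_nonneg (mul_nonneg hV hV) hV)]
  -- e2 :  60 V s⁴ − 40 V³ s² + 12 V⁵ ≤ 23 q s⁵
  have e2 : 60 * V * s ^ 4 - 40 * V ^ 3 * s ^ 2 + 12 * V ^ 5
      ≤ 23 * q * s ^ 5 := by
    obtain ⟨w, hwdef⟩ : ∃ w, w = q * V := ⟨_, rfl⟩
    have hws : w ≤ s := hwdef ▸ hsV
    have hw0' : 0 ≤ w := hwdef ▸ hw0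
    have hcert : 0 ≤ 46 * s ^ 5 - 60 * w * s ^ 4 + 20 * w ^ 3 * s ^ 2
        - 3 * w ^ 5 := by
      nlinarith [mul_nonneg (sub_nonneg.2 hws) (sq_nonneg (2 * s ^ 2 - w ^ 2)),
        mul_nonneg (mul_nonneg hs0 (sq_nonneg (s - w)))
          (by nlinarith [sq_nonneg s, sq_nonneg w, mul_nonneg hs0 hw0'] :
            (0:ℝ) ≤ 31 * s ^ 2 + 14 * s * w + 9 * w ^ 2),
        mul_nonneg (mul_nonneg (mul_nonneg hs0 hw0') (mul_nonneg hw0' hw0'))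
          (sub_nonneg.2 hws), pow_nonneg hs0 5]
    have hsub : 46 * s ^ 5 - 60 * w * s ^ 4 + 20 * w ^ 3 * s ^ 2 - 3 * w ^ 5
        = q * (23 * q * s ^ 5)
          - q * (60 * V * s ^ 4 - 40 * V ^ 3 * s ^ 2 + 12 * V ^ 5) := by
      rw [hwdef]
      linear_combination (-23 * s ^ 5 + 20 * q * V ^ 3 * s ^ 2
        - 3 * q * (q ^ 2 + 2) * V ^ 5) * hq2
    rw [← mul_le_mul_iff_right₀ hqpos]
    linarith [hcert, hsub]
  -- combine
  have har : 2 * a_m * r = s ^ 2 - V ^ 2 := by linarith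
  have h240 : 240 * a_m ^ 2 * V * r ^ 2 = 60 * V * (s ^ 2 - V ^ 2) ^ 2 := by
    rw [← har]; ring
  have h160 : 160 * a_m * V ^ 3 * r = 80 * V ^ 3 * (s ^ 2 - V ^ 2) := by
    rw [← har]; ring
  have h23 : 23 * V ^ 2 + 46 * a_m * r = 23 * s ^ 2 := by linarith
  have hR : q * s ^ 3 * (23 * V ^ 2 + 40 * a_m ^ 2 + 46 * a_m * r)
      = 23 * q * s ^ 5 + 40 * q * a_m ^ 2 * s ^ 3 := by
    linear_combination (q * s ^ 3) * h23
  have hident : 60 * V * (s ^ 2 - V ^ 2) ^ 2 + 80 * V ^ 3 * (s ^ 2 - V ^ 2)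
      + 32 * V ^ 5 = 60 * V * s ^ 4 - 40 * V ^ 3 * s ^ 2 + 12 * V ^ 5 := by
    ring
  linarith [e1, e2, h240, h160, hR, hident]

/-- Nonnegativity with opaque `q`, `s`. -/
lemma full_ineq (a_m ω_m r θ V q s : ℝ) (ha : 0 < a_m) (hω : 0 < ω_m)
    (hr : 0 ≤ r) (hV : 0 ≤ V) (hq0 : 0 ≤ q) (hq2 : q ^ 2 = 2) (hs0 : 0 ≤ s)
    (hs2 : s ^ 2 = V ^ 2 + 2 * a_m * r) (hle : V ^ 2 ≤ 2 * a_m * r) :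
    0 ≤ θ ^ 2 * ((q * s - V) / a_m)
      + |θ| ^ 3 / (3 * ω_m)
      + q * s ^ 3 * (23 * V ^ 2 + 40 * a_m ^ 2 + 46 * a_m * r) / (240 * a_m ^ 3)
      - (V ^ 3 / (3 * a_m) + V * r ^ 2 / a_m
          + 2 * V ^ 3 * r / (3 * a_m ^ 2) + 2 * V ^ 5 / (15 * a_m ^ 3)) := by
  have hq1 : 1 ≤ q := by nlinarith
  have hsV : q * V ≤ s := by
    have h1 : (q * V) ^ 2 ≤ s ^ 2 := by nlinarith
    have hw0 : 0 ≤ q * V := mul_nonneg hq0 hV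
    nlinarith [sq_nonneg (s - q * V), sq_nonneg (s + q * V)]
  have hA : 0 ≤ θ ^ 2 * ((q * s - V) / a_m) := by
    apply mul_nonneg (sq_nonneg θ)
    apply div_nonneg _ ha.le
    nlinarith
  have hB : 0 ≤ |θ| ^ 3 / (3 * ω_m) := by positivity
  have key := core_ineq a_m r V q s ha hr hV hq0 hq2 hs0 hs2 hle
  have hC : V ^ 3 / (3 * a_m) + V * r ^ 2 / a_m
      + 2 * V ^ 3 * r / (3 * a_m ^ 2) + 2 * V ^ 5 / (15 * a_m ^ 3)
      ≤ q * s ^ 3 * (23 * V ^ 2 + 40 * a_m ^ 2 + 46 * a_m * r)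
        / (240 * a_m ^ 3) := by
    rw [← sub_nonneg]
    have hEq : q * s ^ 3 * (23 * V ^ 2 + 40 * a_m ^ 2 + 46 * a_m * r)
          / (240 * a_m ^ 3)
        - (V ^ 3 / (3 * a_m) + V * r ^ 2 / a_m
          + 2 * V ^ 3 * r / (3 * a_m ^ 2) + 2 * V ^ 5 / (15 * a_m ^ 3))
        = (q * s ^ 3 * (23 * V ^ 2 + 40 * a_m ^ 2 + 46 * a_m * r)
          - (80 * a_m ^ 2 * V ^ 3 + 240 * a_m ^ 2 * V * r ^ 2
            + 160 * a_m * V ^ 3 * r + 32 * V ^ 5)) / (240 * a_m ^ 3) := by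
      field_simp
      ring
    rw [hEq]
    exact div_nonneg (by linarith) (by positivity)
  linarith

/-- The terminal cost vanishes at the origin and is nonnegative on the
    terminal set. -/
theorem terminal_cost_nonneg
    (a_m ω_m : ℝ) (ha : a_m > 0) (hω : ω_m > 0) :
    terminalCost a_m ω_m 0 0 0 = 0 ∧
    ∀ r θ V : ℝ, r ≥ 0 → V ≥ 0 → V ^ 2 ≤ 2 * a_m * r →
      0 ≤ terminalCost a_m ω_m r θ V := by
  constructor
  · simp [terminalCost, Real.zero_rpow (by norm_num : ((3:ℝ)/2) ≠ 0)]
  · intro r θ V hr hV hle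
    have hx0 : 0 ≤ V ^ 2 + 2 * a_m * r := by positivity
    rw [terminalCost, rpow_three_halves _ hx0]
    exact full_ineq a_m ω_m r θ V (Real.sqrt 2) (Real.sqrt (V ^ 2 + 2 * a_m * r))
      ha hω hr hV (Real.sqrt_nonneg 2) (Real.sq_sqrt (by norm_num))
      (Real.sqrt_nonneg _) (Real.sq_sqrt hx0) hle
end
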